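/- In the instance with m(m−1) unit jobs and one job of length m on m identical machines, the profile assigning m−1 unit jobs to each machine and the big job to an arbitrary machine is a strong Nash equilibrium with makespan 2m−1, while the optimum makespan is m; hence the strong price of anarchy under EQUI on identical machines is at least 2 − 1/m. -/

import Mathlib

set_option linter.unusedSectionVars false

/-- Load of machine `j` (identical machines, job lengths `p`). -/
def idLoad {n m : ℕ} (p : Fin n → ℝ) (σ : Fin n → Fin m) (j : Fin m) : ℝ :=
  ∑ i ∈ Finset.univ.filter (fun i => σ i = j), p i

/-- EQUI cost of job `i` on identical machines. -/
def idEquiCost {n m : ℕ} (p : Fin n → ℝ) (σ : Fin n → Fin m) (i : Fin n) : ℝ :=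
  ∑ i' ∈ Finset.univ.filter (fun i' => σ i' = σ i), min (p i) (p i')

/-- Strong Nash equilibrium under EQUI on identical machines: no nonempty coalition
can move so that every member strictly decreases its cost. -/
def idEquiStrongNE {n m : ℕ} (p : Fin n → ℝ) (σ : Fin n → Fin m) : Prop :=
  ¬ ∃ (S : Finset (Fin n)) (σ' : Fin n → Fin m), S.Nonempty ∧
      (∀ i ∉ S, σ' i = σ i) ∧ ∀ i ∈ S, idEquiCost p σ' i < idEquiCost p σ i

namespace SPoA

variable {m : ℕ}

def bigJob (m : ℕ) : Fin (m * (m - 1) + 1) := ⟨m * (m - 1), Nat.lt_succ_self _⟩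

lemma unit_iff (i : Fin (m * (m - 1) + 1)) : i.val < m * (m - 1) ↔ i ≠ bigJob m := by
  constructor
  · intro h he; rw [he] at h; simp [bigJob] at h
  · intro h
    have := i.isLt
    have : i.val ≠ m * (m - 1) := fun hv => h (Fin.ext hv)
    omega

section
variable (hm : 2 ≤ m) (p : Fin (m * (m - 1) + 1) → ℝ)
  (hp : ∀ i, p i = if i.val < m * (m - 1) then 1 else (m : ℝ))

include hp

lemma p_unit {i : Fin (m * (m - 1) + 1)} (h : i ≠ bigJob m) : p i = 1 := by
  rw [hp, if_pos ((unit_iff i).2 h)]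

lemma p_big : p (bigJob m) = m := by
  rw [hp]; simp [bigJob]

include hm

lemma one_le_p (i : Fin (m * (m - 1) + 1)) : 1 ≤ p i := by
  rw [hp]; split
  · exact le_refl _
  · exact_mod_cast Nat.one_le_of_lt hm

lemma cost_unit (τ : Fin (m * (m - 1) + 1) → Fin m) {i : Fin (m * (m - 1) + 1)}
    (h : i ≠ bigJob m) :
    idEquiCost p τ i = ((Finset.univ.filter (fun i' => τ i' = τ i)).card : ℝ) := by
  have h2 : ∀ i' ∈ Finset.univ.filter (fun i' => τ i' = τ i), min (p i) (p i') = 1 := by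
    intro i' _
    rw [p_unit p hp h, min_eq_left (one_le_p hm p hp i')]
  rw [idEquiCost, Finset.sum_congr rfl h2, Finset.sum_const, nsmul_eq_mul, mul_one]

lemma cost_big (τ : Fin (m * (m - 1) + 1) → Fin m) :
    idEquiCost p τ (bigJob m) =
    ((Finset.univ.filter (fun i' => τ i' = τ (bigJob m))).card : ℝ) + ((m : ℝ) - 1) := by
  have hb : bigJob m ∈ Finset.univ.filter (fun i' => τ i' = τ (bigJob m)) := by simp
  have h2 : ∀ i' ∈ (Finset.univ.filter (fun i' => τ i' = τ (bigJob m))).erase (bigJob m),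
      min (p (bigJob m)) (p i') = 1 := by
    intro i' hi'
    rw [p_unit p hp (Finset.ne_of_mem_erase hi'), min_eq_right (one_le_p hm p hp _)]
  rw [idEquiCost, ← Finset.add_sum_erase _ _ hb, Finset.sum_congr rfl h2, Finset.sum_const,
    nsmul_eq_mul, mul_one, min_self, p_big p hp, Finset.card_erase_of_mem hb,
    Nat.cast_sub (Finset.card_pos.2 ⟨_, hb⟩)]
  push_cast
  ring

lemma load_eq (τ : Fin (m * (m - 1) + 1) → Fin m) (j : Fin m) :
    idLoad p τ j = ((Finset.univ.filter (fun i => τ i = j)).card : ℝ) +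
      (if τ (bigJob m) = j then (m : ℝ) - 1 else 0) := by
  rw [idLoad]
  by_cases hb : τ (bigJob m) = j
  · have hbm : bigJob m ∈ Finset.univ.filter (fun i => τ i = j) := by simp [hb]
    have h2 : ∀ i ∈ (Finset.univ.filter (fun i => τ i = j)).erase (bigJob m), p i = 1 :=
      fun i hi => p_unit p hp (Finset.ne_of_mem_erase hi)
    rw [← Finset.add_sum_erase _ _ hbm, if_pos hb, p_big p hp, Finset.sum_congr rfl h2,
      Finset.sum_const, nsmul_eq_mul, mul_one, Finset.card_erase_of_mem hbm,
      Nat.cast_sub (Finset.card_pos.2 ⟨_, hbm⟩)]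
    push_cast
    ring
  · rw [if_neg hb]
    have h2 : ∀ i ∈ Finset.univ.filter (fun i => τ i = j), p i = 1 := by
      intro i hi
      refine p_unit p hp (fun he => hb ?_)
      rw [← he]
      exact (Finset.mem_filter.1 hi).2
    rw [Finset.sum_congr rfl h2, Finset.sum_const, nsmul_eq_mul, mul_one, add_zero]

end

lemma card_fiber (σ : Fin (m * (m - 1) + 1) → Fin m)
    (hσ : ∀ j : Fin m,
      (Finset.univ.filter (fun i : Fin (m * (m - 1) + 1) =>
        σ i = j ∧ i.val < m * (m - 1))).card = m - 1) (j : Fin m) :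
    (Finset.univ.filter (fun i => σ i = j)).card =
      (m - 1) + (if σ (bigJob m) = j then 1 else 0) := by
  have e1 : (Finset.univ.filter (fun i : Fin (m * (m - 1) + 1) => σ i = j)).filter
      (fun i => i.val < m * (m - 1)) =
      Finset.univ.filter (fun i => σ i = j ∧ i.val < m * (m - 1)) := by
    rw [Finset.filter_filter]
  have e2 : (Finset.univ.filter (fun i : Fin (m * (m - 1) + 1) => σ i = j)).filter
      (fun i => ¬ i.val < m * (m - 1)) =
      if σ (bigJob m) = j then {bigJob m} else ∅ := by
    ext i
    simp only [Finset.filter_filter, Finset.mem_filter, Finset.mem_univ, true_and]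
    constructor
    · rintro ⟨h1, h2⟩
      have hib : i = bigJob m := by
        by_contra hne
        exact h2 ((unit_iff i).2 hne)
      subst hib
      rw [if_pos h1]
      simp
    · intro h
      split at h
      · simp only [Finset.mem_singleton] at h
        subst h
        exact ⟨by assumption, by simp [bigJob]⟩
      · simp at h
  rw [← Finset.card_filter_add_card_filter_not
      (p := fun i : Fin (m * (m - 1) + 1) => i.val < m * (m - 1)), e1, e2, hσ]
  split <;> simp

lemma sum_fibers (τ : Fin (m * (m - 1) + 1) → Fin m) :
    ∑ j : Fin m, (Finset.univ.filter (fun i => τ i = j)).card = m * (m - 1) + 1 := by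
  rw [← Finset.card_eq_sum_card_fiberwise (f := τ) (t := Finset.univ)
      (fun i _ => Finset.mem_univ (τ i))]
  simp

end SPoA

theorem equi_identical_spoa_lower
    (m : ℕ) (hm : 2 ≤ m) (p : Fin (m * (m - 1) + 1) → ℝ)
    (hp : ∀ i, p i = if i.val < m * (m - 1) then 1 else (m : ℝ))
    (σ : Fin (m * (m - 1) + 1) → Fin m)
    (hσ : ∀ j : Fin m,
      (Finset.univ.filter (fun i : Fin (m * (m - 1) + 1) =>
        σ i = j ∧ i.val < m * (m - 1))).card = m - 1) :
    idEquiStrongNE p σ ∧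
    (⨆ j, idLoad p σ j) = 2 * (m : ℝ) - 1 ∧
    (∃ τ : Fin (m * (m - 1) + 1) → Fin m, (⨆ j, idLoad p τ j) = (m : ℝ)) ∧
    (∀ τ : Fin (m * (m - 1) + 1) → Fin m, (m : ℝ) ≤ ⨆ j, idLoad p τ j) := by
  have hm1 : 1 ≤ m := by omega
  haveI : Nonempty (Fin m) := ⟨⟨0, by omega⟩⟩
  have hcard := SPoA.card_fiber σ hσ
  have hm1R : (1 : ℝ) ≤ m := by exact_mod_cast hm1
  refine ⟨?_, ?_, ?_, ?_⟩
  · -- strong Nash equilibrium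
    rintro ⟨S, σ', hS, hfix, himp⟩
    have hsum' : ∑ j, (Finset.univ.filter (fun i => σ' i = j)).card = m * (m - 1) + 1 :=
      SPoA.sum_fibers σ'
    have key1 : ∀ j : Fin m, m ≤ (Finset.univ.filter (fun i => σ' i = j)).card →
        ∀ i, σ' i = j → i ∉ S := by
      intro j hj i hij hiS
      have hlt := himp i hiS
      by_cases hib : i = SPoA.bigJob m
      · subst hib
        rw [SPoA.cost_big hm p hp σ', SPoA.cost_big hm p hp σ] at hlt
        have h1 : (Finset.univ.filter (fun i' => σ' i' = σ' (SPoA.bigJob m))).card =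
            (Finset.univ.filter (fun i => σ' i = j)).card := by rw [hij]
        have h2 : (Finset.univ.filter (fun i' => σ i' = σ (SPoA.bigJob m))).card = m := by
          rw [hcard, if_pos rfl]; omega
        rw [h1, h2] at hlt
        have : ((Finset.univ.filter (fun i => σ' i = j)).card : ℝ) < m := by linarith
        have : (Finset.univ.filter (fun i => σ' i = j)).card < m := by exact_mod_cast this
        omega
      · rw [SPoA.cost_unit hm p hp σ' hib, SPoA.cost_unit hm p hp σ hib] at hlt
        have h1 : (Finset.univ.filter (fun i' => σ' i' = σ' i)).card =
            (Finset.univ.filter (fun i => σ' i = j)).card := by rw [hij]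
        have h2 : (Finset.univ.filter (fun i' => σ i' = σ i)).card ≤ m := by
          rw [hcard]; split <;> omega
        rw [h1] at hlt
        have : (Finset.univ.filter (fun i => σ' i = j)).card <
            (Finset.univ.filter (fun i' => σ i' = σ i)).card := by exact_mod_cast hlt
        omega
    have key2 : ∀ j : Fin m, m ≤ (Finset.univ.filter (fun i => σ' i = j)).card →
        σ (SPoA.bigJob m) = j ∧
        (Finset.univ.filter (fun i => σ' i = j)) = (Finset.univ.filter (fun i => σ i = j)) := by
      intro j hj
      have hsub : (Finset.univ.filter (fun i => σ' i = j)) ⊆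
          (Finset.univ.filter (fun i => σ i = j)) := by
        intro i hi
        have hij : σ' i = j := (Finset.mem_filter.1 hi).2
        have hiS := key1 j hj i hij
        exact Finset.mem_filter.2 ⟨Finset.mem_univ i, by rw [← hfix i hiS, hij]⟩
      have hle : (Finset.univ.filter (fun i => σ' i = j)).card ≤
          (Finset.univ.filter (fun i => σ i = j)).card := Finset.card_le_card hsub
      have hbj : σ (SPoA.bigJob m) = j := by
        by_contra hne
        rw [hcard, if_neg hne] at hle
        omega
      refine ⟨hbj, Finset.eq_of_subset_of_card_le hsub ?_⟩
      rw [hcard, if_pos hbj]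
      omega
    obtain ⟨js, hjs⟩ : ∃ j, m ≤ (Finset.univ.filter (fun i => σ' i = j)).card := by
      by_contra h
      push_neg at h
      have hle : ∑ j, (Finset.univ.filter (fun i => σ' i = j)).card ≤
          ∑ _j : Fin m, (m - 1) :=
        Finset.sum_le_sum (fun j _ => by have := h j; omega)
      rw [hsum', Finset.sum_const, Finset.card_univ, Fintype.card_fin, smul_eq_mul] at hle
      omega
    obtain ⟨hbjs, hfeq⟩ := key2 js hjs
    have hbS : SPoA.bigJob m ∉ S := by
      apply key1 js hjs
      have : SPoA.bigJob m ∈ Finset.univ.filter (fun i => σ' i = js) := by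
        rw [hfeq]
        simp [hbjs]
      exact (Finset.mem_filter.1 this).2
    have hNjs : (Finset.univ.filter (fun i => σ' i = js)).card = m := by
      rw [hfeq, hcard, if_pos hbjs]; omega
    have hlow : ∀ j : Fin m, m - 1 ≤ (Finset.univ.filter (fun i => σ' i = j)).card := by
      by_contra h
      push_neg at h
      obtain ⟨j1, hj1⟩ := h
      have hj1ne : j1 ≠ js := by
        intro he; rw [he, hNjs] at hj1; omega
      have hmem1 : j1 ∈ Finset.univ.erase js := Finset.mem_erase.2 ⟨hj1ne, Finset.mem_univ j1⟩
      have h1 : ∑ j, (Finset.univ.filter (fun i => σ' i = j)).card =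
          (Finset.univ.filter (fun i => σ' i = js)).card +
          ∑ j ∈ Finset.univ.erase js, (Finset.univ.filter (fun i => σ' i = j)).card :=
        (Finset.add_sum_erase _ _ (Finset.mem_univ js)).symm
      have h2 : ∑ j ∈ Finset.univ.erase js, (Finset.univ.filter (fun i => σ' i = j)).card =
          (Finset.univ.filter (fun i => σ' i = j1)).card +
          ∑ j ∈ (Finset.univ.erase js).erase j1, (Finset.univ.filter (fun i => σ' i = j)).card :=
        (Finset.add_sum_erase _ _ hmem1).symm
      have h3 : ∑ j ∈ (Finset.univ.erase js).erase j1,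
          (Finset.univ.filter (fun i => σ' i = j)).card ≤
          ((Finset.univ.erase js).erase j1).card * (m - 1) := by
        apply Finset.sum_le_card_nsmul
        intro j hj
        have hjne : j ≠ js := (Finset.mem_erase.1 (Finset.mem_erase.1 hj).2).1
        by_contra hc
        push_neg at hc
        have hge : m ≤ (Finset.univ.filter (fun i => σ' i = j)).card := by omega
        exact hjne (((key2 j hge).1).symm.trans hbjs)
      have hc2 : ((Finset.univ.erase js).erase j1).card = m - 2 := by
        rw [Finset.card_erase_of_mem hmem1, Finset.card_erase_of_mem (Finset.mem_univ js),
          Finset.card_univ, Fintype.card_fin]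
        omega
      rw [hc2] at h3
      obtain ⟨c, hc⟩ : ∃ c, (Finset.univ.filter (fun i => σ' i = j1)).card = c := ⟨_, rfl⟩
      rw [hc] at hj1
      have hfin : m * (m - 1) + 1 ≤ m + c + (m - 2) * (m - 1) := by omega
      obtain ⟨k, hk⟩ : ∃ k, m = k + 2 := ⟨m - 2, by omega⟩
      rw [hk] at hfin hj1
      have e1 : k + 2 - 1 = k + 1 := by omega
      have e2 : k + 2 - 2 = k := by omega
      rw [e1] at hfin hj1
      rw [e2] at hfin
      have e3 : (k + 2) * (k + 1) = k * (k + 1) + 2 * (k + 1) := by ring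
      omega
    obtain ⟨i, hiS⟩ := hS
    have hib : i ≠ SPoA.bigJob m := fun he => hbS (he ▸ hiS)
    have hi_not_js : σ i ≠ js := by
      intro he
      have hmem : i ∈ Finset.univ.filter (fun i => σ' i = js) := by
        rw [hfeq]
        exact Finset.mem_filter.2 ⟨Finset.mem_univ i, he⟩
      exact key1 js hjs i (Finset.mem_filter.1 hmem).2 hiS
    have hlt := himp i hiS
    rw [SPoA.cost_unit hm p hp σ' hib, SPoA.cost_unit hm p hp σ hib] at hlt
    have hold : (Finset.univ.filter (fun i' => σ i' = σ i)).card = m - 1 := by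
      rw [hcard, if_neg (fun h : σ (SPoA.bigJob m) = σ i => hi_not_js (h ▸ hbjs))]
      omega
    rw [hold] at hlt
    have hnew := hlow (σ' i)
    have : (Finset.univ.filter (fun i' => σ' i' = σ' i)).card < m - 1 := by exact_mod_cast hlt
    omega
  · -- makespan of σ is 2m - 1
    have hb : idLoad p σ (σ (SPoA.bigJob m)) = 2 * (m : ℝ) - 1 := by
      rw [SPoA.load_eq hm p hp σ _, hcard, if_pos rfl, if_pos rfl]
      have e : (m - 1 + 1 : ℕ) = m := by omega
      rw [e]
      ring
    have hle : ∀ j, idLoad p σ j ≤ 2 * (m : ℝ) - 1 := by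
      intro j
      rw [SPoA.load_eq hm p hp σ j, hcard]
      by_cases h : σ (SPoA.bigJob m) = j
      · rw [if_pos h, if_pos h]
        have e : (m - 1 + 1 : ℕ) = m := by omega
        rw [e]
        linarith
      · rw [if_neg h, if_neg h, add_zero, add_zero, Nat.cast_sub hm1]
        push_cast
        linarith
    exact le_antisymm (ciSup_le hle) (hb ▸ le_ciSup (Set.finite_range _).bddAbove _)
  · -- optimal assignment with makespan m
    have hmpos : 0 < m - 1 := by omega
    set τ : Fin (m * (m - 1) + 1) → Fin m := fun i =>
      if h : i.val < m * (m - 1) then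
        ⟨1 + i.val % (m - 1), by have := Nat.mod_lt i.val hmpos; omega⟩
      else ⟨0, by omega⟩ with hτ
    refine ⟨τ, ?_⟩
    set j0 : Fin m := ⟨0, by omega⟩ with hj0
    have hτb : τ (SPoA.bigJob m) = j0 := by
      rw [hτ]
      simp only [SPoA.bigJob]
      exact dif_neg (lt_irrefl _)
    have hτu : ∀ i : Fin (m * (m - 1) + 1), i.val < m * (m - 1) →
        (τ i).val = 1 + i.val % (m - 1) := by
      intro i hi
      rw [hτ]
      simp only [dif_pos hi]
    have hfib0 : Finset.univ.filter (fun i => τ i = j0) = {SPoA.bigJob m} := by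
      ext i
      simp only [Finset.mem_filter, Finset.mem_univ, true_and, Finset.mem_singleton]
      constructor
      · intro h
        by_contra hne
        have hi : i.val < m * (m - 1) := (SPoA.unit_iff i).2 hne
        have hv := hτu i hi
        rw [h] at hv
        have hz : j0.val = 0 := rfl
        omega
      · intro h
        rw [h, hτb]
    have hcardle : ∀ j : Fin m, (Finset.univ.filter (fun i => τ i = j)).card ≤ m := by
      intro j
      by_cases h0 : j = j0
      · rw [h0, hfib0, Finset.card_singleton]; omega
      · have hmap : ∀ i ∈ Finset.univ.filter (fun i => τ i = j),
            i.val / (m - 1) ∈ Finset.range m := by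
          intro i hi
          have hij : τ i = j := (Finset.mem_filter.1 hi).2
          have hiu : i.val < m * (m - 1) := by
            by_contra hc
            have : i = SPoA.bigJob m := by
              by_contra hne
              exact hc ((SPoA.unit_iff i).2 hne)
            rw [this, hτb] at hij
            exact h0 hij.symm
          rw [Finset.mem_range]
          exact Nat.div_lt_iff_lt_mul hmpos |>.2 hiu
        have hinj : Set.InjOn (fun i : Fin (m * (m - 1) + 1) => i.val / (m - 1))
            (Finset.univ.filter (fun i => τ i = j)) := by
          intro i1 h1 i2 h2 he
          simp only [Finset.coe_filter, Set.mem_setOf_eq, Finset.mem_univ, true_and] at h1 h2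
          have h1u : i1.val < m * (m - 1) := by
            by_contra hc
            have : i1 = SPoA.bigJob m := by
              by_contra hne; exact hc ((SPoA.unit_iff i1).2 hne)
            rw [this, hτb] at h1
            exact h0 h1.symm
          have h2u : i2.val < m * (m - 1) := by
            by_contra hc
            have : i2 = SPoA.bigJob m := by
              by_contra hne; exact hc ((SPoA.unit_iff i2).2 hne)
            rw [this, hτb] at h2
            exact h0 h2.symm
          have e1 : (τ i1).val = 1 + i1.val % (m - 1) := hτu i1 h1u
          have e2 : (τ i2).val = 1 + i2.val % (m - 1) := hτu i2 h2u
          rw [h1] at e1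
          rw [h2] at e2
          have emod : i1.val % (m - 1) = i2.val % (m - 1) := by omega
          have d1 := Nat.div_add_mod i1.val (m - 1)
          have d2 := Nat.div_add_mod i2.val (m - 1)
          simp only at he
          rw [he] at d1
          apply Fin.ext
          omega
        calc (Finset.univ.filter (fun i => τ i = j)).card
            ≤ (Finset.range m).card := Finset.card_le_card_of_injOn _ hmap hinj
          _ = m := Finset.card_range m
    have hload0 : idLoad p τ j0 = m := by
      rw [SPoA.load_eq hm p hp τ j0, if_pos hτb, hfib0, Finset.card_singleton]
      push_cast
      ring
    have hloadle : ∀ j, idLoad p τ j ≤ (m : ℝ) := by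
      intro j
      rw [SPoA.load_eq hm p hp τ j]
      by_cases hbj : τ (SPoA.bigJob m) = j
      · have : j = j0 := by rw [← hbj, hτb]
        rw [this, if_pos hτb, hfib0, Finset.card_singleton]
        push_cast
        linarith
      · rw [if_neg hbj, add_zero]
        exact_mod_cast hcardle j
    exact le_antisymm (ciSup_le hloadle) (hload0 ▸ le_ciSup (Set.finite_range _).bddAbove j0)
  · -- lower bound m for every assignment
    intro τ
    have hsumload : ∑ j : Fin m, idLoad p τ j = (m : ℝ) * m := by
      rw [Finset.sum_congr rfl (fun j _ => SPoA.load_eq hm p hp τ j), Finset.sum_add_distrib,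
        Finset.sum_ite_eq, if_pos (Finset.mem_univ _), ← Nat.cast_sum]
      rw [SPoA.sum_fibers τ]
      push_cast [Nat.cast_sub hm1]
      ring
    obtain ⟨j, hj⟩ : ∃ j, (m : ℝ) ≤ idLoad p τ j := by
      by_contra h
      push_neg at h
      have hlt : ∑ j : Fin m, idLoad p τ j < ∑ _j : Fin m, (m : ℝ) :=
        Finset.sum_lt_sum_of_nonempty Finset.univ_nonempty (fun j _ => h j)
      rw [hsumload, Finset.sum_const, Finset.card_univ, Fintype.card_fin, nsmul_eq_mul] at hlt
      exact lt_irrefl _ hlt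
    exact hj.trans (le_ciSup (Set.finite_range _).bddAbove j)
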